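/- Let Ψ(λ) = t₁/3 − (t₂ − λ)², with roots u^± = t₂ ± √(t₁/3) (t₁ > 0). With S₂ = [[−1/2, 0],[0, 0]], S₁ = 0, and Ω₁ = [[0,1],[1,0]], the central invariant formula c(u) = (1/3)·(Ψ'(u))²·(∂ₖΨ ∂ₗΨ (S₂^{kl} − u S₁^{kl})) / (∂ₖΨ ∂ₗΨ Ω₁^{kl})², evaluated at λ = u^± with the partial derivatives ∂Ψ/∂t₁ = 1/3, ∂Ψ/∂t₂ = −2(t₂ − λ), gives c(u⁺) = c(u⁻) = −1/24. -/

import Mathlib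

open Matrix

/-- S₂ = [[−1/2, 0], [0, 0]]. -/
noncomputable def S2 : Matrix (Fin 2) (Fin 2) ℝ := !![-1/2, 0; 0, 0]

/-- S₁ = 0. -/
noncomputable def S1 : Matrix (Fin 2) (Fin 2) ℝ := 0

/-- Ω₁ = [[0,1],[1,0]]. -/
noncomputable def Om1 : Matrix (Fin 2) (Fin 2) ℝ := !![0, 1; 1, 0]

/-- The gradient of Ψ(λ;t) = t₁/3 − (t₂ − λ)² in (t₁, t₂): (1/3, −2(t₂ − λ)). -/
noncomputable def gradPsi (t₂ lam : ℝ) : Fin 2 → ℝ := ![1/3, -2*(t₂ - lam)]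

/-- for t₁ > 0, the roots u^± = t₂ ± √(t₁/3) of Ψ(λ) = t₁/3 − (t₂ − λ)²
satisfy Ψ(u^±) = 0, and the central invariant formula
c(u) = (1/3)(Ψ'(u))²·(∂ₖΨ∂ₗΨ(S₂ − uS₁)^{kl})/(∂ₖΨ∂ₗΨΩ₁^{kl})² gives −1/24 at both roots. -/
theorem stmt_16 (t₁ t₂ : ℝ) (h : 0 < t₁) :
    ∀ u : ℝ, (u = t₂ + Real.sqrt (t₁/3) ∨ u = t₂ - Real.sqrt (t₁/3)) →
      (t₁/3 - (t₂ - u)^2 = 0) ∧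
      (1/3) * (2*(t₂ - u))^2 *
          ((∑ k : Fin 2, ∑ l : Fin 2, gradPsi t₂ u k * gradPsi t₂ u l * (S2 k l - u * S1 k l)) /
            (∑ k : Fin 2, ∑ l : Fin 2, gradPsi t₂ u k * gradPsi t₂ u l * Om1 k l)^2)
        = -1/24 := by
  intro u hu
  have hsq : (t₂ - u)^2 = t₁/3 := by
    have h3 : Real.sqrt (t₁/3) ^ 2 = t₁/3 :=
      Real.sq_sqrt (by positivity)
    rcases hu with rfl | rfl <;> [skip; skip] <;>
      · ring_nf
        ring_nf at h3
        linarith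
  have hroot : t₁/3 - (t₂ - u)^2 = 0 := by rw [hsq]; ring
  refine ⟨hroot, ?_⟩
  have hne : t₂ - u ≠ 0 := by
    intro h0
    rw [h0] at hsq
    simp at hsq
    linarith
  simp only [S2, S1, Om1, gradPsi, Fin.sum_univ_two, Matrix.cons_val', Matrix.cons_val_zero,
    Matrix.cons_val_one, Matrix.head_cons, Matrix.head_fin_const, Matrix.empty_val',
    Matrix.cons_val_fin_one, Matrix.zero_apply, Matrix.of_apply]
  field_simp
  nlinarith [hsq, sq_nonneg (t₂ - u), mul_pos h h]
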